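/- Let X and Y be locally compact Hausdorff spaces and let T : C₀(X)⁺ → C₀(Y)⁺ be a bijection satisfying ‖T(f+g)‖ = ‖Tf + Tg‖ for all f, g ∈ C₀(X)⁺. Let y ∈ Y and let x₀ ∈ X be the unique point with ⋂_{f ∈ F_y} supp(f) = {x₀}, where F_y = {f ∈ C₀(X)⁺ : Tf(y) > 0}. If e₁, e₂ ∈ C₀(X)⁺ each equal 1 on some (possibly different) open neighborhood of x₀, then Te₁(y) = Te₂(y). -/

import Mathlib

open scoped ZeroAtInfty

/-- The positive cone of `C₀(X, ℝ)`. -/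
def posCone (X : Type*) [TopologicalSpace X] : Set C₀(X, ℝ) :=
  {f | ∀ x, 0 ≤ f x}

section Helpers

open Set Filter ZeroAtInftyContinuousMap

variable {Z : Type*} [TopologicalSpace Z]

private lemma C0.apply_le_norm (f : C₀(Z, ℝ)) (z : Z) : f z ≤ ‖f‖ := by
  have h := BoundedContinuousFunction.norm_coe_le_norm f.toBCF z
  rw [ZeroAtInftyContinuousMap.norm_toBCF_eq_norm] at h
  calc f z ≤ |f z| := le_abs_self _
    _ ≤ ‖f‖ := h

private lemma C0.norm_le' (f : C₀(Z, ℝ)) {c : ℝ} (hc : 0 ≤ c) (h : ∀ z, |f z| ≤ c) :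
    ‖f‖ ≤ c := by
  rw [← ZeroAtInftyContinuousMap.norm_toBCF_eq_norm]
  exact (BoundedContinuousFunction.norm_le hc).mpr fun z => h z

/-- Build a `C₀` function from a compactly supported continuous function. -/
private def ofCpt (f : C(Z, ℝ)) (hf : HasCompactSupport f) : C₀(Z, ℝ) :=
  ⟨f, by
    have h1 : ∀ᶠ x in Filter.cocompact Z, f x = 0 := by
      rw [Filter.eventually_iff, Filter.mem_cocompact]
      exact ⟨tsupport f, hf, fun x hx => image_eq_zero_of_notMem_tsupport hx⟩
    exact Filter.Tendsto.congr' (h1.mono fun x hx => hx.symm) tendsto_const_nhds⟩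

@[simp] private lemma ofCpt_apply (f : C(Z, ℝ)) (hf : HasCompactSupport f) (z : Z) :
    ofCpt f hf z = f z := rfl

private lemma posCone_add {f g : C₀(Z, ℝ)} (hf : f ∈ posCone Z) (hg : g ∈ posCone Z) :
    f + g ∈ posCone Z := fun x => by
  rw [ZeroAtInftyContinuousMap.add_apply]
  exact add_nonneg (hf x) (hg x)

end Helpers

section KeyLemma

open Set Filter

/-- The key step: adding a function `d` with `T d y = 0` does not change the value of the
image at `y`. -/
private lemma key_lemma {X Y : Type*} [TopologicalSpace X]
    [TopologicalSpace Y] [T2Space Y] [LocallyCompactSpace Y]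
    (T : C₀(X, ℝ) → C₀(Y, ℝ))
    (hbij : Set.BijOn T (posCone X) (posCone Y))
    (hnorm : ∀ f ∈ posCone X, ∀ g ∈ posCone X, ‖T (f + g)‖ = ‖T f + T g‖)
    (y : Y) (e d : C₀(X, ℝ)) (he : e ∈ posCone X) (hd : d ∈ posCone X)
    (hTdy : T d y = 0) : T (e + d) y = T e y := by
  set A : C₀(Y, ℝ) := T (e + d) with hA_def
  set B : C₀(Y, ℝ) := T e with hB_def
  set D : C₀(Y, ℝ) := T d with hD_def
  have hed : e + d ∈ posCone X := posCone_add he hd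
  have hA : A ∈ posCone Y := hbij.mapsTo hed
  have hB : B ∈ posCone Y := hbij.mapsTo he
  have hD : D ∈ posCone Y := hbij.mapsTo hd
  -- the main quantitative claim
  have main : ∀ ε : ℝ, 0 < ε → B y ≤ A y + ε ∧ A y ≤ B y + 3 * ε := by
    intro ε hε
    -- the neighborhood W of y
    set W : Set Y := {z | D z < ε} ∩ ({z | B z < B y + ε} ∩ {z | A z < A y + ε}) with hW_def
    have hWopen : IsOpen W := by
      refine ((isOpen_lt (map_continuous D) continuous_const).inter
        ((isOpen_lt (map_continuous B) continuous_const).inter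
          (isOpen_lt (map_continuous A) continuous_const)))
    have hyW : y ∈ W := by
      refine ⟨?_, ?_, ?_⟩
      · show D y < ε
        rw [hTdy]; exact hε
      · show B y < B y + ε
        linarith
      · show A y < A y + ε
        linarith
    -- the bump v at y inside W
    obtain ⟨v, hv1, hv0, hvcpt, hv01⟩ :=
      exists_continuous_one_zero_of_isCompact (isCompact_singleton : IsCompact {y})
        hWopen.isClosed_compl (Set.disjoint_singleton_left.mpr fun h => h hyW)
    have hvy : v y = 1 := hv1 rfl
    have hcozW : ∀ z : Y, v z ≠ 0 → z ∈ W := by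
      intro z hz
      by_contra hzW
      exact hz (hv0 hzW)
    set v₀ : C₀(Y, ℝ) := ofCpt v hvcpt with hv₀_def
    set t : ℝ := ‖A‖ + ‖B‖ + ‖D‖ + 1 with ht_def
    have ht0 : 0 < t := by
      have := norm_nonneg A; have := norm_nonneg B; have := norm_nonneg D; linarith
    have hv₀app : ∀ z : Y, (t • v₀) z = t * v z := by
      intro z
      rw [ZeroAtInftyContinuousMap.smul_apply, hv₀_def, ofCpt_apply, smul_eq_mul]
    have htv : t • v₀ ∈ posCone Y := by
      intro z
      rw [hv₀app z]
      exact mul_nonneg ht0.le (hv01 z).1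
    obtain ⟨g, hg, hTg⟩ := hbij.surjOn htv
    set H : C₀(Y, ℝ) := T (e + g) with hH_def
    have heg : e + g ∈ posCone X := posCone_add he hg
    have hH : H ∈ posCone Y := hbij.mapsTo heg
    -- identity 2 : ‖B + t • v₀‖ = ‖H‖
    have id2 : ‖B + t • v₀‖ = ‖H‖ := by
      have h := (hnorm e he g hg).symm
      rw [hTg] at h
      exact h
    -- identity 1 : ‖A + t • v₀‖ = ‖H + D‖
    have id1 : ‖A + t • v₀‖ = ‖H + D‖ := by
      have h1 := hnorm (e + d) hed g hg
      have h2 := hnorm (e + g) heg d hd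
      have h3 : e + d + g = e + g + d := by abel
      rw [h3] at h1
      rw [hTg] at h1
      rw [← h1, h2]
    -- lower bounds
    have lb : ∀ P : C₀(Y, ℝ), P y + t ≤ ‖P + t • v₀‖ := by
      intro P
      have h := C0.apply_le_norm (P + t • v₀) y
      rw [ZeroAtInftyContinuousMap.add_apply, hv₀app y, hvy, mul_one] at h
      exact h
    -- upper bounds
    have ub : ∀ (P : C₀(Y, ℝ)) (c : ℝ), P ∈ posCone Y → 0 ≤ c →
        (∀ z ∈ W, P z ≤ c) → ‖P + t • v₀‖ ≤ max ‖P‖ (t + c) := by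
      intro P c hP hc hPW
      refine C0.norm_le' _ (le_trans (norm_nonneg P) (le_max_left _ _)) fun z => ?_
      have hnn : 0 ≤ P z + t * v z :=
        add_nonneg (hP z) (mul_nonneg ht0.le (hv01 z).1)
      rw [ZeroAtInftyContinuousMap.add_apply, hv₀app z, abs_of_nonneg hnn]
      by_cases hz : v z = 0
      · rw [hz, mul_zero, add_zero]
        exact le_trans (C0.apply_le_norm P z) (le_max_left _ _)
      · have hzW := hcozW z hz
        have hv1' : v z ≤ 1 := (hv01 z).2
        have h2 : P z + t * v z ≤ c + t * 1 :=
          add_le_add (hPW z hzW) (mul_le_mul_of_nonneg_left hv1' ht0.le)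
        refine le_trans h2 (le_trans (by linarith) (le_max_right _ _))
    -- monotone norm
    have mono : ‖H‖ ≤ ‖H + D‖ := by
      refine C0.norm_le' _ (norm_nonneg _) fun z => ?_
      rw [abs_of_nonneg (hH z)]
      calc H z ≤ H z + D z := by linarith [hD z]
        _ = (H + D) z := rfl
        _ ≤ ‖H + D‖ := C0.apply_le_norm _ z
    constructor
    · -- direction 1 : B y ≤ A y + ε
      have c1 : B y + t ≤ ‖A + t • v₀‖ := by
        calc B y + t ≤ ‖B + t • v₀‖ := lb B
          _ = ‖H‖ := id2
          _ ≤ ‖H + D‖ := mono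
          _ = ‖A + t • v₀‖ := id1.symm
      have c2 : ‖A + t • v₀‖ ≤ max ‖A‖ (t + (A y + ε)) :=
        ub A (A y + ε) hA (by linarith [hA y]) fun z hz => le_of_lt hz.2.2
      have c3 : B y + t ≤ max ‖A‖ (t + (A y + ε)) := le_trans c1 c2
      rcases le_max_iff.mp c3 with h | h
      · exfalso
        have hBy := hB y
        have hnB := norm_nonneg B
        have hnD := norm_nonneg D
        linarith [ht_def]
      · linarith
    · -- direction 2 : A y ≤ B y + 3 ε
      by_contra hcon
      push_neg at hcon
      have s1 : t + A y ≤ ‖H + D‖ := by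
        calc t + A y = A y + t := by ring
          _ ≤ ‖A + t • v₀‖ := lb A
          _ = ‖H + D‖ := id1
      have s2 : ‖H‖ ≤ t + (B y + ε) := by
        have := ub B (B y + ε) hB (by linarith [hB y]) fun z hz => le_of_lt hz.2.1
        have hn : ‖B‖ ≤ t + (B y + ε) := by
          have := norm_nonneg A; have := norm_nonneg D; have := hB y; linarith
        calc ‖H‖ = ‖B + t • v₀‖ := id2.symm
          _ ≤ max ‖B‖ (t + (B y + ε)) := ub B (B y + ε) hB (by linarith [hB y])
              fun z hz => le_of_lt hz.2.1
          _ ≤ t + (B y + ε) := max_le hn le_rfl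
      -- find a point ζ where H + D is big
      have hex : ∃ ζ : Y, t + (B y + 2 * ε) < (H + D) ζ := by
        by_contra hno
        push_neg at hno
        have : ‖H + D‖ ≤ t + (B y + 2 * ε) := by
          refine C0.norm_le' _ (by have := hB y; linarith) fun z => ?_
          have hnn : 0 ≤ (H + D) z := by
            rw [ZeroAtInftyContinuousMap.add_apply]
            exact add_nonneg (hH z) (hD z)
          rw [abs_of_nonneg hnn]; exact hno z
        linarith
      obtain ⟨ζ, hζ⟩ := hex
      have hHDζ : H ζ + D ζ = (H + D) ζ := rfl
      have hHζub : H ζ ≤ t + (B y + ε) := le_trans (C0.apply_le_norm H ζ) s2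
      have hDζ : ε < D ζ := by linarith [hζ, hHDζ, hHζub]
      have hDζub : D ζ ≤ ‖D‖ := C0.apply_le_norm D ζ
      have hHζlb : t + (B y + 2 * ε) - ‖D‖ < H ζ := by linarith
      -- ζ is away from the support of v
      have hsuppv : tsupport (⇑v) ⊆ {z | D z ≤ ε} := by
        refine closure_minimal ?_ (isClosed_le (map_continuous D) continuous_const)
        intro z hz
        show D z ≤ ε
        exact le_of_lt (hcozW z (Function.mem_support.mp hz)).1
      have hζv : ζ ∉ tsupport (⇑v) := fun h => absurd (hsuppv h) (not_le.mpr hDζ)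
      -- bump b at ζ, disjoint from supp v
      obtain ⟨b, hb1, hb0, hbcpt, hb01⟩ :=
        exists_continuous_one_zero_of_isCompact (isCompact_singleton : IsCompact {ζ})
          (isClosed_tsupport (⇑v)) (Set.disjoint_singleton_left.mpr hζv)
      have hbζ : b ζ = 1 := hb1 rfl
      set b₀ : C₀(Y, ℝ) := ofCpt b hbcpt with hb₀_def
      have hb₀app : ∀ z : Y, (t • b₀) z = t * b z := by
        intro z
        rw [ZeroAtInftyContinuousMap.smul_apply, hb₀_def, ofCpt_apply, smul_eq_mul]
      have htb : t • b₀ ∈ posCone Y := by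
        intro z
        rw [hb₀app z]
        exact mul_nonneg ht0.le (hb01 z).1
      obtain ⟨q, hq, hTq⟩ := hbij.surjOn htb
      have hgq : g + q ∈ posCone X := posCone_add hg hq
      -- identity 3
      have id3 : ‖H + t • b₀‖ = ‖B + T (g + q)‖ := by
        have h1 := hnorm (e + g) heg q hq
        have h2 := hnorm e he (g + q) hgq
        have h3 : e + g + q = e + (g + q) := by abel
        rw [h3] at h1
        rw [hTq] at h1
        rw [← h1, h2]
      -- the sum of the two bumps has small norm
      have hsum : ‖T (g + q)‖ ≤ t := by
        have h1 := hnorm g hg q hq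
        rw [hTg, hTq] at h1
        rw [h1]
        refine C0.norm_le' _ ht0.le fun z => ?_
        have hvz : 0 ≤ v z := (hv01 z).1
        have hbz : 0 ≤ b z := (hb01 z).1
        have hnn : 0 ≤ t * v z + t * b z :=
          add_nonneg (mul_nonneg ht0.le hvz) (mul_nonneg ht0.le hbz)
        rw [ZeroAtInftyContinuousMap.add_apply, hv₀app z, hb₀app z, abs_of_nonneg hnn]
        have hvb : v z + b z ≤ 1 := by
          by_cases hz : z ∈ tsupport (⇑v)
          · have hbz0 : b z = 0 := hb0 hz
            have hvz1 : v z ≤ 1 := (hv01 z).2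
            rw [hbz0]; linarith
          · have hvz0 : v z = 0 := image_eq_zero_of_notMem_tsupport hz
            have hbz1 : b z ≤ 1 := (hb01 z).2
            rw [hvz0]; linarith
        calc t * v z + t * b z = t * (v z + b z) := by ring
          _ ≤ t * 1 := mul_le_mul_of_nonneg_left hvb ht0.le
          _ = t := mul_one t
      -- upper bound
      have ub3 : ‖H + t • b₀‖ ≤ ‖B‖ + t := by
        rw [id3]
        calc ‖B + T (g + q)‖ ≤ ‖B‖ + ‖T (g + q)‖ := norm_add_le _ _
          _ ≤ ‖B‖ + t := by linarith
      -- lower bound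
      have lb3 : H ζ + t ≤ ‖H + t • b₀‖ := by
        have h := C0.apply_le_norm (H + t • b₀) ζ
        rw [ZeroAtInftyContinuousMap.add_apply, hb₀app ζ, hbζ, mul_one] at h
        exact h
      have : t + (B y + 2 * ε) - ‖D‖ + t < ‖B‖ + t := by linarith
      have hBy := hB y
      have hnB := norm_nonneg B
      have hnA := norm_nonneg A
      have hnD := norm_nonneg D
      linarith [ht_def]
  -- conclude
  have h1 : B y ≤ A y := by
    refine le_of_forall_pos_le_add fun ε hε => ?_
    exact (main ε hε).1
  have h2 : A y ≤ B y := by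
    refine le_of_forall_pos_le_add fun ε hε => ?_
    have := (main (ε / 3) (by linarith)).2
    linarith
  exact le_antisymm h2 h1

end KeyLemma

/-- **Lemma 3.2.** Let `T` be a norm additive bijection between positive cones, `y ∈ Y`,
and `x₀` the unique point with `⋂_{f ∈ F_y} supp(f) = {x₀}`. If `e₁, e₂ ∈ C₀(X)⁺` both
equal `1` on (possibly different) open neighborhoods of `x₀`, then `Te₁(y) = Te₂(y)`. -/
theorem stmt14 {X Y : Type*} [TopologicalSpace X] [T2Space X] [LocallyCompactSpace X]
    [TopologicalSpace Y] [T2Space Y] [LocallyCompactSpace Y]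
    (T : C₀(X, ℝ) → C₀(Y, ℝ))
    (hbij : Set.BijOn T (posCone X) (posCone Y))
    (hnorm : ∀ f ∈ posCone X, ∀ g ∈ posCone X, ‖T (f + g)‖ = ‖T f + T g‖)
    (y : Y) (x₀ : X)
    (hx₀ : (⋂ f ∈ {g : C₀(X, ℝ) | g ∈ posCone X ∧ 0 < T g y},
      tsupport (⇑f : X → ℝ)) = {x₀})
    (e₁ e₂ : C₀(X, ℝ)) (he₁ : e₁ ∈ posCone X) (he₂ : e₂ ∈ posCone X)
    (U₁ U₂ : Set X) (hU₁ : IsOpen U₁) (hU₂ : IsOpen U₂)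
    (hxU₁ : x₀ ∈ U₁) (hxU₂ : x₀ ∈ U₂)
    (he₁U : ∀ x ∈ U₁, e₁ x = 1) (he₂U : ∀ x ∈ U₂, e₂ x = 1) :
    T e₁ y = T e₂ y := by
  classical
  set U : Set X := U₁ ∩ U₂ with hU_def
  have hUopen : IsOpen U := hU₁.inter hU₂
  have hx₀U : x₀ ∈ U := ⟨hxU₁, hxU₂⟩
  obtain ⟨K, hKcpt, hx₀K, hKU⟩ := exists_compact_subset hUopen hx₀U
  obtain ⟨φ, hφ1, hφ0, hφcpt, hφ01⟩ :=
    exists_continuous_one_zero_of_isCompact hKcpt hUopen.isClosed_compl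
      (Set.disjoint_left.mpr fun z hz hz' => hz' (hKU hz))
  set e₀ : C₀(X, ℝ) := ofCpt φ hφcpt with he₀_def
  have he₀ : e₀ ∈ posCone X := fun x => by simpa [he₀_def] using (hφ01 x).1
  have main : ∀ (e : C₀(X, ℝ)) (V : Set X), e ∈ posCone X → IsOpen V → x₀ ∈ V → U ⊆ V →
      (∀ x ∈ V, e x = 1) → T e y = T e₀ y := by
    intro e V he hVopen hx₀V hUV heV
    set dd : C₀(X, ℝ) := e - e₀ with hdd_def
    have hdd : dd ∈ posCone X := by
      intro x
      rw [ZeroAtInftyContinuousMap.sub_apply]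
      by_cases hx : x ∈ U
      · have h1 : e x = 1 := heV x (hUV hx)
        have h2 : φ x ≤ 1 := (hφ01 x).2
        simp only [he₀_def, ofCpt_apply]
        linarith
      · have h0 : φ x = 0 := hφ0 hx
        simp only [he₀_def, ofCpt_apply, h0, sub_zero]
        exact he x
    -- dd vanishes on the open set interior K
    have hddz : ∀ x ∈ interior K, dd x = 0 := by
      intro x hx
      have hxK : x ∈ K := interior_subset hx
      have h1 : φ x = 1 := hφ1 hxK
      have h2 : e x = 1 := heV x (hUV (hKU hxK))
      simp [hdd_def, he₀_def, h1, h2]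
    have hx₀dd : x₀ ∉ tsupport (⇑dd : X → ℝ) := by
      have hsub : tsupport (⇑dd : X → ℝ) ⊆ (interior K)ᶜ := by
        refine closure_minimal ?_ isOpen_interior.isClosed_compl
        intro x hx hxi
        exact hx (hddz x hxi)
      intro hmem
      exact (hsub hmem) hx₀K
    -- T dd y = 0
    have hTdd : T dd y = 0 := by
      have hge : 0 ≤ T dd y := hbij.mapsTo hdd y
      rcases eq_or_lt_of_le hge with h | h
      · exact h.symm
      · exfalso
        have hmem : dd ∈ {g : C₀(X, ℝ) | g ∈ posCone X ∧ 0 < T g y} := ⟨hdd, h⟩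
        have hx₀mem : x₀ ∈ ⋂ f ∈ {g : C₀(X, ℝ) | g ∈ posCone X ∧ 0 < T g y},
            tsupport (⇑f : X → ℝ) := by
          rw [hx₀]; exact rfl
        exact hx₀dd (Set.mem_iInter₂.mp hx₀mem dd hmem)
    have hsum : e₀ + dd = e := by
      simp [hdd_def]
    calc T e y = T (e₀ + dd) y := by rw [hsum]
      _ = T e₀ y := key_lemma T hbij hnorm y e₀ dd he₀ hdd hTdd
  have h1 : T e₁ y = T e₀ y :=
    main e₁ U₁ he₁ hU₁ hxU₁ Set.inter_subset_left he₁U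
  have h2 : T e₂ y = T e₀ y :=
    main e₂ U₂ he₂ hU₂ hxU₂ Set.inter_subset_right he₂U
  rw [h1, h2]
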